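/- SP-MS from one-sided bounds: suppose the two one-sided bounds max_{β'}(Tr(α F(β')) − v) ≥ c‖α − Π_{A*}(α)‖_F and max_{α'}(v − Tr(α' F(β))) ≥ c‖β − Π_{B*}(β)‖_F hold for all (α,β) ∈ Spec_n × Spec_m, and the joint space has diameter at most 2. Then for every z = (α,β) not in Z* := A* × B*: sup_{z'∈Z, z'≠z} ⟨G(z), z − z'⟩ / ‖z − z'‖_F ≥ (c/2)·‖z − Π_{Z*}(z)‖_F, where G(α,β) = (F(β), −F*(α)). -/

import Mathlib

open scoped ComplexOrder Matrix

def spectraplex (d : ℕ) : Set (Matrix (Fin d) (Fin d) ℂ) :=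
  {X | X.PosSemidef ∧ X.trace = 1}

noncomputable def frobNorm {d : ℕ} (A : Matrix (Fin d) (Fin d) ℂ) : ℝ :=
  Real.sqrt (Matrix.trace (Aᴴ * A)).re

lemma trace_sq_re {d : ℕ} (A : Matrix (Fin d) (Fin d) ℂ) :
    (Matrix.trace (Aᴴ * A)).re = ∑ i, ∑ j, Complex.normSq (A i j) := by
  rw [Matrix.trace]
  rw [Complex.re_sum]
  simp only [Matrix.diag_apply, Matrix.mul_apply, Matrix.conjTranspose_apply,
    Complex.re_sum]
  rw [Finset.sum_comm]
  congr 1; ext i; congr 1; ext j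
  rw [Complex.star_def, ← Complex.normSq_eq_conj_mul_self]
  simp

lemma frobNorm_nonneg {d : ℕ} (A : Matrix (Fin d) (Fin d) ℂ) : 0 ≤ frobNorm A :=
  Real.sqrt_nonneg _

lemma frobNorm_sq {d : ℕ} (A : Matrix (Fin d) (Fin d) ℂ) :
    frobNorm A ^ 2 = ∑ i, ∑ j, Complex.normSq (A i j) := by
  rw [frobNorm, Real.sq_sqrt, trace_sq_re]
  rw [trace_sq_re]
  exact Finset.sum_nonneg fun i _ => Finset.sum_nonneg fun j _ => Complex.normSq_nonneg _

lemma frobNorm_pos {d : ℕ} {A : Matrix (Fin d) (Fin d) ℂ} (h : A ≠ 0) : 0 < frobNorm A := by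
  rcases lt_or_eq_of_le (frobNorm_nonneg A) with h' | h'
  · exact h'
  exfalso; apply h
  have h2 : frobNorm A ^ 2 = 0 := by rw [← h']; ring
  rw [frobNorm_sq] at h2
  ext i j
  have := (Finset.sum_eq_zero_iff_of_nonneg (fun i _ => Finset.sum_nonneg
    (fun j _ => Complex.normSq_nonneg _))).mp h2 i (Finset.mem_univ i)
  have := (Finset.sum_eq_zero_iff_of_nonneg (fun j _ => Complex.normSq_nonneg _)).mp
    this j (Finset.mem_univ j)
  simpa [Complex.normSq_eq_zero] using this

/-- Cauchy–Schwarz for the real trace pairing. -/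
lemma trace_mul_re_le {d : ℕ} (X Y : Matrix (Fin d) (Fin d) ℂ) :
    |(Matrix.trace (X * Y)).re| ≤ frobNorm X * frobNorm Y := by
  have h1 : |(Matrix.trace (X * Y)).re| ≤ ∑ p : Fin d × Fin d, ‖X p.1 p.2‖ * ‖Y p.2 p.1‖ := by
    calc |(Matrix.trace (X * Y)).re| ≤ ‖Matrix.trace (X * Y)‖ := Complex.abs_re_le_norm _
      _ = ‖∑ p : Fin d × Fin d, X p.1 p.2 * Y p.2 p.1‖ := by
          unfold Matrix.trace
          simp only [Matrix.diag_apply, Matrix.mul_apply]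
          rw [← Finset.sum_product']
          rfl
      _ ≤ ∑ p : Fin d × Fin d, ‖X p.1 p.2 * Y p.2 p.1‖ := norm_sum_le _ _
      _ = ∑ p : Fin d × Fin d, ‖X p.1 p.2‖ * ‖Y p.2 p.1‖ := by
          simp [map_mul]
  have h2 : (∑ p : Fin d × Fin d, ‖X p.1 p.2‖ * ‖Y p.2 p.1‖) ^ 2 ≤
      (∑ p : Fin d × Fin d, ‖X p.1 p.2‖ ^ 2) *
      (∑ p : Fin d × Fin d, ‖Y p.2 p.1‖ ^ 2) :=
    Finset.sum_mul_sq_le_sq_mul_sq _ _ _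
  have hXs : (∑ p : Fin d × Fin d, ‖X p.1 p.2‖ ^ 2) = frobNorm X ^ 2 := by
    rw [frobNorm_sq, ← Finset.sum_product', Finset.univ_product_univ]
    simp [Complex.sq_norm]
  have hYs : (∑ p : Fin d × Fin d, ‖Y p.2 p.1‖ ^ 2) = frobNorm Y ^ 2 := by
    rw [frobNorm_sq, ← Finset.sum_product', Finset.univ_product_univ]
    exact Fintype.sum_equiv (Equiv.prodComm (Fin d) (Fin d)) _ _
      (fun p => by simp [Complex.sq_norm])
  rw [hXs, hYs] at h2
  have hP : 0 ≤ ∑ p : Fin d × Fin d, ‖X p.1 p.2‖ * ‖Y p.2 p.1‖ :=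
    Finset.sum_nonneg fun p _ => mul_nonneg (norm_nonneg _) (norm_nonneg _)
  refine h1.trans ?_
  calc (∑ p : Fin d × Fin d, ‖X p.1 p.2‖ * ‖Y p.2 p.1‖)
      = Real.sqrt ((∑ p : Fin d × Fin d, ‖X p.1 p.2‖ * ‖Y p.2 p.1‖) ^ 2) :=
        (Real.sqrt_sq hP).symm
    _ ≤ Real.sqrt (frobNorm X ^ 2 * frobNorm Y ^ 2) := Real.sqrt_le_sqrt h2
    _ = frobNorm X * frobNorm Y := by
        rw [← mul_pow, Real.sqrt_sq (mul_nonneg (frobNorm_nonneg X) (frobNorm_nonneg Y))]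

lemma spectraplex_def (d : ℕ) : spectraplex d = {X | X.PosSemidef ∧ X.trace = 1} := rfl

lemma spectraplex_nonempty (d : ℕ) [NeZero d] : (spectraplex d).Nonempty := by
  refine ⟨Matrix.diagonal (fun _ => (d : ℂ)⁻¹), ?_, ?_⟩
  · refine Matrix.PosSemidef.diagonal fun i => ?_
    show (0 : ℂ) ≤ ((d : ℂ))⁻¹
    rw [show ((d : ℂ)) = (((d : ℝ)) : ℂ) by norm_cast, ← Complex.ofReal_inv]
    exact Complex.zero_le_real.mpr (inv_nonneg.mpr (Nat.cast_nonneg d))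
  · have hd : (d : ℂ) ≠ 0 := Nat.cast_ne_zero.mpr (NeZero.ne d)
    simp [Matrix.trace_diagonal, Finset.card_univ]

lemma le_sqrt_add (x y : ℝ) (hx : 0 ≤ x) : x ≤ Real.sqrt (x ^ 2 + y ^ 2) := by
  nth_rewrite 1 [show x = Real.sqrt (x ^ 2) from (Real.sqrt_sq hx).symm]
  exact Real.sqrt_le_sqrt (le_add_of_nonneg_right (sq_nonneg y))

lemma sqrt_add_le (x y : ℝ) (hx : 0 ≤ x) (hy : 0 ≤ y) :
    Real.sqrt (x ^ 2 + y ^ 2) ≤ x + y := by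
  rw [show x + y = Real.sqrt ((x + y) ^ 2) from (Real.sqrt_sq (by linarith)).symm]
  exact Real.sqrt_le_sqrt (by nlinarith)

/-- SP-MS from the two one-sided error bounds: if
`max_{β'}(Tr(α F(β')) − v) ≥ c‖α − Π_{A*}α‖_F` and
`max_{α'}(v − Tr(α' F(β))) ≥ c‖β − Π_{B*}β‖_F` hold for all `(α,β)`, and the joint space
has diameter at most 2, then for every `z = (α,β) ∉ Z* = A* × B*`,
`sup_{z'≠z} ⟪G(z), z−z'⟫/‖z−z'‖ ≥ (c/2)‖z − Π_{Z*}z‖`, with `G(α,β) = (F(β), −F*(α))`. -/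
theorem spms_from_one_sided_bounds (n m : ℕ) [NeZero n] [NeZero m]
    (F : Matrix (Fin m) (Fin m) ℂ →ₗ[ℝ] Matrix (Fin n) (Fin n) ℂ)
    (Fadj : Matrix (Fin n) (Fin n) ℂ →ₗ[ℝ] Matrix (Fin m) (Fin m) ℂ)
    (hadj : ∀ (A : Matrix (Fin n) (Fin n) ℂ) (B : Matrix (Fin m) (Fin m) ℂ),
      (Matrix.trace (A * F B)).re = (Matrix.trace (Fadj A * B)).re)
    (v : ℝ)
    (Astar : Set (Matrix (Fin n) (Fin n) ℂ))
    (hAstar : Astar = {α ∈ spectraplex n | ∀ β ∈ spectraplex m,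
      (Matrix.trace (α * F β)).re ≤ v})
    (Bstar : Set (Matrix (Fin m) (Fin m) ℂ))
    (hBstar : Bstar = {β ∈ spectraplex m | ∀ α ∈ spectraplex n,
      v ≤ (Matrix.trace (α * F β)).re})
    (c : ℝ) (hc : 0 < c)
    (hbound1 : ∀ α ∈ spectraplex n, ∀ αp ∈ Astar,
      (∀ y ∈ Astar, frobNorm (α - αp) ≤ frobNorm (α - y)) →
      c * frobNorm (α - αp) ≤
        sSup ((fun β' => (Matrix.trace (α * F β')).re - v) '' spectraplex m))
    (hbound2 : ∀ β ∈ spectraplex m, ∀ βp ∈ Bstar,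
      (∀ y ∈ Bstar, frobNorm (β - βp) ≤ frobNorm (β - y)) →
      c * frobNorm (β - βp) ≤
        sSup ((fun α' => v - (Matrix.trace (α' * F β)).re) '' spectraplex n))
    (hdiam : ∀ α ∈ spectraplex n, ∀ α' ∈ spectraplex n, ∀ β ∈ spectraplex m,
      ∀ β' ∈ spectraplex m,
      Real.sqrt (frobNorm (α - α') ^ 2 + frobNorm (β - β') ^ 2) ≤ 2) :
    ∀ α ∈ spectraplex n, ∀ β ∈ spectraplex m, (α, β) ∉ Astar ×ˢ Bstar →
    ∀ αp ∈ Astar, (∀ y ∈ Astar, frobNorm (α - αp) ≤ frobNorm (α - y)) →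
    ∀ βp ∈ Bstar, (∀ y ∈ Bstar, frobNorm (β - βp) ≤ frobNorm (β - y)) →
      c / 2 * Real.sqrt (frobNorm (α - αp) ^ 2 + frobNorm (β - βp) ^ 2) ≤
        sSup {r : ℝ | ∃ α' ∈ spectraplex n, ∃ β' ∈ spectraplex m, (α', β') ≠ (α, β) ∧
          r = ((Matrix.trace (F β * (α - α'))).re - (Matrix.trace (Fadj α * (β - β'))).re) /
            Real.sqrt (frobNorm (α - α') ^ 2 + frobNorm (β - β') ^ 2)} := by
  intro α hα β hβ hz αp hαp hαpmin βp hβp hβpmin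
  set a := frobNorm (α - αp) with ha
  set b := frobNorm (β - βp) with hb
  set D := Real.sqrt (a ^ 2 + b ^ 2) with hD
  set T := {r : ℝ | ∃ α' ∈ spectraplex n, ∃ β' ∈ spectraplex m, (α', β') ≠ (α, β) ∧
      r = ((Matrix.trace (F β * (α - α'))).re - (Matrix.trace (Fadj α * (β - β'))).re) /
        Real.sqrt (frobNorm (α - α') ^ 2 + frobNorm (β - β') ^ 2)} with hT
  have hann : 0 ≤ a := frobNorm_nonneg _
  have hbnn : 0 ≤ b := frobNorm_nonneg _
  -- D > 0
  have hDpos : 0 < D := by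
    have : α ∉ Astar ∨ β ∉ Bstar := by
      by_contra h; push_neg at h; exact hz (Set.mem_prod.mpr ⟨h.1, h.2⟩)
    rcases this with h | h
    · have hne : α - αp ≠ 0 := fun h0 => h (by rwa [sub_eq_zero.mp h0])
      have := frobNorm_pos hne
      exact Real.sqrt_pos.mpr (by nlinarith [sq_nonneg b])
    · have hne : β - βp ≠ 0 := fun h0 => h (by rwa [sub_eq_zero.mp h0])
      have := frobNorm_pos hne
      exact Real.sqrt_pos.mpr (by nlinarith [sq_nonneg a])
  -- denominators are positive when z' ≠ z
  have hden : ∀ (α' : Matrix (Fin n) (Fin n) ℂ) (β' : Matrix (Fin m) (Fin m) ℂ),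
      (α', β') ≠ (α, β) →
      0 < Real.sqrt (frobNorm (α - α') ^ 2 + frobNorm (β - β') ^ 2) := by
    intro α' β' hne
    have : α' ≠ α ∨ β' ≠ β := by
      by_contra h; push_neg at h; exact hne (Prod.ext h.1 h.2)
    have h1 := frobNorm_nonneg (α - α')
    have h2 := frobNorm_nonneg (β - β')
    rcases this with h | h
    · have := frobNorm_pos (A := α - α') (fun h0 => h (sub_eq_zero.mp h0).symm)
      exact Real.sqrt_pos.mpr (by nlinarith)
    · have := frobNorm_pos (A := β - β') (fun h0 => h (sub_eq_zero.mp h0).symm)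
      exact Real.sqrt_pos.mpr (by nlinarith)
  -- T is bounded above
  have hTbdd : BddAbove T := by
    refine ⟨frobNorm (F β) + frobNorm (Fadj α), ?_⟩
    rintro r ⟨α', hα', β', hβ', hne, rfl⟩
    set dd := Real.sqrt (frobNorm (α - α') ^ 2 + frobNorm (β - β') ^ 2) with hdd
    have hddpos := hden α' β' hne
    have hfa : frobNorm (α - α') ≤ dd := le_sqrt_add _ _ (frobNorm_nonneg _)
    have hfb : frobNorm (β - β') ≤ dd := by
      rw [hdd, add_comm]; exact le_sqrt_add _ _ (frobNorm_nonneg _)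
    have h1 : (Matrix.trace (F β * (α - α'))).re ≤ frobNorm (F β) * dd :=
      le_trans (le_trans (le_abs_self _) (trace_mul_re_le _ _))
        (mul_le_mul_of_nonneg_left hfa (frobNorm_nonneg _))
    have h2 : -(frobNorm (Fadj α) * dd) ≤ (Matrix.trace (Fadj α * (β - β'))).re := by
      have habs := abs_le.mp (trace_mul_re_le (Fadj α) (β - β'))
      nlinarith [mul_le_mul_of_nonneg_left hfb (frobNorm_nonneg (Fadj α))]
    rw [div_le_iff₀ hddpos]
    nlinarith
  -- main contradiction argument
  by_contra hcon
  push_neg at hcon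
  set S := sSup T with hS
  set ε := min (c * D / 4) ((c / 2 * D - S) / 2) with hε
  have hεpos : 0 < ε :=
    lt_min (by positivity) (by simp only [hS]; linarith)
  have hεD : ε ≤ c * D / 4 := min_le_left _ _
  have hεS : ε ≤ (c / 2 * D - S) / 2 := min_le_right _ _
  -- pick β' almost achieving the sup in hbound1
  have himg1 : ((fun β' => (Matrix.trace (α * F β')).re - v) '' spectraplex m).Nonempty :=
    (spectraplex_nonempty m).image _
  obtain ⟨s1, hs1mem, hs1⟩ := exists_lt_of_lt_csSup himg1
    (lt_of_lt_of_le (by linarith [hbound1 α hα αp hαp hαpmin] : c * a - ε < c * a)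
      (hbound1 α hα αp hαp hαpmin))
  obtain ⟨β', hβ', rfl⟩ := hs1mem
  have himg2 : ((fun α' => v - (Matrix.trace (α' * F β)).re) '' spectraplex n).Nonempty :=
    (spectraplex_nonempty n).image _
  obtain ⟨s2, hs2mem, hs2⟩ := exists_lt_of_lt_csSup himg2
    (lt_of_lt_of_le (by linarith [hbound2 β hβ βp hβp hβpmin] : c * b - ε < c * b)
      (hbound2 β hβ βp hβp hβpmin))
  obtain ⟨α', hα', rfl⟩ := hs2mem
  have hs1' : c * a - ε < (Matrix.trace (α * F β')).re - v := hs1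
  have hs2' : c * b - ε < v - (Matrix.trace (α' * F β)).re := hs2
  -- the numerator identity
  set N := (Matrix.trace (F β * (α - α'))).re - (Matrix.trace (Fadj α * (β - β'))).re with hN
  have hkey : N = ((Matrix.trace (α * F β')).re - v) + (v - (Matrix.trace (α' * F β)).re) := by
    have e1 : Matrix.trace (F β * (α - α')) = Matrix.trace (α * F β) - Matrix.trace (α' * F β) := by
      rw [mul_sub, Matrix.trace_sub, Matrix.trace_mul_comm (F β) α,
        Matrix.trace_mul_comm (F β) α']
    have e2 : (Matrix.trace (Fadj α * (β - β'))).re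
        = (Matrix.trace (α * F β)).re - (Matrix.trace (α * F β')).re := by
      rw [mul_sub, Matrix.trace_sub, Complex.sub_re, ← hadj, ← hadj]
    rw [hN, e1, e2, Complex.sub_re]
    ring
  have hab : D ≤ a + b := sqrt_add_le a b hann hbnn
  have hNlb : c * D - 2 * ε < N := by
    rw [hkey]
    have : c * D ≤ c * (a + b) := mul_le_mul_of_nonneg_left hab hc.le
    linarith
  have hNpos : 0 < N := by nlinarith
  have hne : (α', β') ≠ (α, β) := by
    intro hEq
    have h1 : α' = α := congrArg Prod.fst hEq
    have h2 : β' = β := congrArg Prod.snd hEq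
    rw [hN, h1, h2, sub_self, sub_self, mul_zero, mul_zero] at hNpos
    simp at hNpos
  set dd := Real.sqrt (frobNorm (α - α') ^ 2 + frobNorm (β - β') ^ 2) with hdd
  have hddpos := hden α' β' hne
  have hdd2 : dd ≤ 2 := hdiam α hα α' hα' β hβ β' hβ'
  have hmem : N / dd ∈ T := ⟨α', hα', β', hβ', hne, rfl⟩
  have hle : N / dd ≤ S := le_csSup hTbdd hmem
  have hhalf : N / 2 ≤ N / dd :=
    (div_le_div_iff_of_pos_left hNpos two_pos hddpos).mpr hdd2
  linarith
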